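/- For all positive integers k, l, and any permutation π ∈ S_n: C(kl+n-1-des(π), n) = Σ_{στ=π} C(k+n-1-des(σ), n) · C(l+n-1-des(τ), n), where the sum ranges over all pairs (σ,τ) ∈ S_n × S_n with στ = π. -/

import Mathlib

open Finset
open scoped Classical

/-- The value `π(s)` (0-indexed) of a permutation of `Fin n`, as a natural number. -/
def aval (n : ℕ) (π : Equiv.Perm (Fin n)) (s : ℕ) : ℕ :=
  if h : s < n then (π ⟨s, h⟩ : ℕ) else s

/-- The descent set of `π ∈ S_n` (0-indexed positions `s` with `π(s) > π(s+1)`). -/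
def desSetA (n : ℕ) (π : Equiv.Perm (Fin n)) : Finset ℕ :=
  (Finset.range (n - 1)).filter (fun s => aval n π (s + 1) < aval n π s)

/-- The descent number of `π ∈ S_n`. -/
def desA (n : ℕ) (π : Equiv.Perm (Fin n)) : ℕ := (desSetA n π).card

/-- The cyclic descent number of `π ∈ S_n`: ordinary descents together with a
descent in the last position when `π(n) > π(1)` (0-indexed: `π(n-1) > π(0)`). -/
def cdesA (n : ℕ) (π : Equiv.Perm (Fin n)) : ℕ :=
  desA n π + (if aval n π 0 < aval n π (n - 1) then 1 else 0)

namespace StructA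

variable {n : ℕ}

/-- the lexicographic key of a function at a point -/
def key {m : ℕ} (h : Fin n → Fin m) (i : Fin n) : ℕ ×ₗ ℕ := toLex ((h i : ℕ), (i : ℕ))

lemma key_inj {m : ℕ} (h : Fin n → Fin m) : Function.Injective (key h) := by
  intro i j hij
  have : ((h i : ℕ), (i : ℕ)) = ((h j : ℕ), (j : ℕ)) := toLex.injective hij
  exact Fin.ext (congrArg Prod.snd this)

/-- `h` is compatible with `π` -/
def Compat {m : ℕ} (h : Fin n → Fin m) (π : Equiv.Perm (Fin n)) : Prop :=
  StrictMono (fun s : Fin n => key h (π s))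

noncomputable def Cset (m : ℕ) (π : Equiv.Perm (Fin n)) : Finset (Fin n → Fin m) :=
  univ.filter (fun h => Compat h π)

lemma mem_Cset {m : ℕ} {π : Equiv.Perm (Fin n)} {h : Fin n → Fin m} :
    h ∈ Cset m π ↔ Compat h π := by simp [Cset]

lemma compat_sort {m : ℕ} (h : Fin n → Fin m) : Compat h (Tuple.sort (key h)) :=
  (Tuple.monotone_sort (key h)).strictMono_of_injective
    ((key_inj h).comp (Tuple.sort (key h)).injective)

lemma compat_unique {m : ℕ} {h : Fin n → Fin m} {σ σ' : Equiv.Perm (Fin n)}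
    (h1 : Compat h σ) (h2 : Compat h σ') : σ = σ' := by
  have := Tuple.unique_monotone (f := key h) (σ := σ) (τ := σ') h1.monotone h2.monotone
  exact Equiv.ext fun i => key_inj h (congrFun this i)

/-- strict monotonicity from adjacent comparisons -/
lemma strictMono_of_adj {α : Type*} [Preorder α] {f : Fin n → α}
    (H : ∀ s : ℕ, ∀ hs : s + 1 < n, f ⟨s, by omega⟩ < f ⟨s + 1, hs⟩) : StrictMono f := by
  intro a b hab
  have key : ∀ t : ℕ, ∀ h : (a : ℕ) + t < n, 0 < t → f a < f ⟨(a : ℕ) + t, h⟩ := by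
    intro t
    induction t with
    | zero => omega
    | succ t ih =>
      intro h _
      rcases Nat.eq_zero_or_pos t with ht | ht
      · subst ht
        have := H a.1 (by omega)
        simpa using this
      · exact (ih (by omega) ht).trans (H ((a : ℕ) + t) (by omega))
  have hb : (b : ℕ) = (a : ℕ) + ((b : ℕ) - (a : ℕ)) := by omega
  have := key ((b : ℕ) - (a : ℕ)) (by omega) (by omega)
  convert this using 2
  exact Fin.ext hb

lemma compat_iff_adj {m : ℕ} {h : Fin n → Fin m} {π : Equiv.Perm (Fin n)} :
    Compat h π ↔ ∀ s : ℕ, ∀ hs : s + 1 < n,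
      key h (π ⟨s, by omega⟩) < key h (π ⟨s + 1, hs⟩) := by
  constructor
  · intro hc s hs
    exact hc (show (⟨s, by omega⟩ : Fin n) < ⟨s + 1, hs⟩ by simp [Fin.lt_def])
  · intro H
    exact strictMono_of_adj (f := fun s : Fin n => key h (π s)) H

lemma mem_desSetA {π : Equiv.Perm (Fin n)} {s : ℕ} (hs : s + 1 < n) :
    s ∈ desSetA n π ↔ (π ⟨s + 1, hs⟩ : ℕ) < (π ⟨s, by omega⟩ : ℕ) := by
  simp only [desSetA, mem_filter, mem_range]
  simp only [aval]
  rw [dif_pos hs, dif_pos (show s < n by omega)]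
  constructor
  · tauto
  · intro h; exact ⟨by omega, h⟩

lemma desA_le : ∀ (π : Equiv.Perm (Fin n)), desA n π ≤ n - 1 := by
  intro π
  calc (desSetA n π).card ≤ (range (n-1)).card := card_le_card (filter_subset _ _)
  _ = n - 1 := card_range _


lemma strictMono_gap {g : Fin n → ℕ} (hg : StrictMono g) (s t : Fin n) (hst : s ≤ t) :
    g s + ((t : ℕ) - (s : ℕ)) ≤ g t := by
  have main : ∀ u : ℕ, ∀ hu : (s : ℕ) + u < n, g s + u ≤ g ⟨(s : ℕ) + u, hu⟩ := by
    intro u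
    induction u with
    | zero =>
      intro hu
      have he : (⟨(s : ℕ) + 0, hu⟩ : Fin n) = s := Fin.ext (by simp)
      rw [he]
      omega
    | succ u ih =>
      intro hu
      have h1 := ih (by omega)
      have h2 : g ⟨(s : ℕ) + u, by omega⟩ < g ⟨(s : ℕ) + (u + 1), hu⟩ :=
        hg (by simp [Fin.lt_def])
      omega
  have hle : (s : ℕ) ≤ (t : ℕ) := hst
  have he : (⟨(s : ℕ) + ((t : ℕ) - (s : ℕ)), by omega⟩ : Fin n) = t := Fin.ext (by simp; omega)
  have := main ((t : ℕ) - (s : ℕ)) (by omega)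
  rwa [he] at this

/-- number of descents among positions `< s` -/
def dcnt (π : Equiv.Perm (Fin n)) (s : ℕ) : ℕ := ((desSetA n π) ∩ range s).card

lemma dcnt_le (π : Equiv.Perm (Fin n)) (s : ℕ) : dcnt π s ≤ s :=
  le_trans (card_le_card inter_subset_right) (le_of_eq (card_range s))

lemma dcnt_le_desA (π : Equiv.Perm (Fin n)) (s : ℕ) : dcnt π s ≤ desA n π :=
  card_le_card inter_subset_left

lemma dcnt_succ (π : Equiv.Perm (Fin n)) (s : ℕ) :
    dcnt π (s + 1) = dcnt π s + (if s ∈ desSetA n π then 1 else 0) := by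
  by_cases hs : s ∈ desSetA n π
  · rw [if_pos hs]
    have he : desSetA n π ∩ range (s + 1) = insert s (desSetA n π ∩ range s) := by
      rw [range_add_one, inter_comm, insert_inter_of_mem hs, inter_comm]
    rw [dcnt, he, card_insert_of_notMem (fun hmem => by
      have := mem_of_mem_inter_right hmem; simp at this)]
    rfl
  · rw [if_neg hs, add_zero]
    have he : desSetA n π ∩ range (s + 1) = desSetA n π ∩ range s := by
      rw [range_add_one, inter_comm, insert_inter_of_notMem hs, inter_comm]
    rw [dcnt, he]; rfl

lemma dcnt_last (π : Equiv.Perm (Fin n)) : dcnt π (n - 1) = desA n π := by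
  have hsub : desSetA n π ⊆ range (n - 1) := filter_subset _ _
  rw [dcnt, inter_eq_left.mpr hsub]; rfl

/-- the associated strictly increasing sequence -/
def bval {m : ℕ} (π : Equiv.Perm (Fin n)) (h : Fin n → Fin m) (s : Fin n) : ℕ :=
  (h (π s) : ℕ) + ((s : ℕ) - dcnt π (s : ℕ))

lemma bval_strictMono {m : ℕ} {π : Equiv.Perm (Fin n)} {h : Fin n → Fin m}
    (hh : Compat h π) : StrictMono (bval π h) := by
  apply strictMono_of_adj
  intro s hs
  have hkey := compat_iff_adj.mp hh s hs
  simp only [key, Prod.Lex.lt_iff, ofLex_toLex] at hkey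
  have hd := dcnt_succ π s
  have hdle := dcnt_le π s
  by_cases hmem : s ∈ desSetA n π
  · have hπ := (mem_desSetA hs).mp hmem
    have hval : (h (π ⟨s, by omega⟩) : ℕ) < (h (π ⟨s + 1, hs⟩) : ℕ) := by
      rcases hkey with h1 | ⟨-, h2⟩
      · exact h1
      · omega
    rw [if_pos hmem] at hd
    simp only [bval]
    omega
  · have hval : (h (π ⟨s, by omega⟩) : ℕ) ≤ (h (π ⟨s + 1, hs⟩) : ℕ) := by
      rcases hkey with h1 | ⟨h2, -⟩
      · exact le_of_lt h1
      · omega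
    rw [if_neg hmem] at hd
    simp only [bval]
    omega

/-- backward map: raw value -/
noncomputable def bwdval (π : Equiv.Perm (Fin n)) (S : Finset ℕ) (hcard : S.card = n)
    (i : Fin n) : ℕ :=
  (S.orderEmbOfFin hcard (π⁻¹ i) : ℕ) + dcnt π ((π⁻¹ i : Fin n) : ℕ) - ((π⁻¹ i : Fin n) : ℕ)

/-- backward map -/
noncomputable def bwd {m : ℕ} (hm : 0 < m) (π : Equiv.Perm (Fin n)) (S : Finset ℕ)
    (hcard : S.card = n) : Fin n → Fin m :=
  fun i => ⟨bwdval π S hcard i % m, Nat.mod_lt _ hm⟩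

lemma orderEmbOfFin_strictMono' {S : Finset ℕ} (hcard : S.card = n) :
    StrictMono (fun x : Fin n => (S.orderEmbOfFin hcard x : ℕ)) :=
  fun _ _ hxy => (S.orderEmbOfFin hcard).strictMono hxy

lemma orderEmbOfFin_ge {S : Finset ℕ} (hcard : S.card = n) (s : Fin n) :
    (s : ℕ) ≤ (S.orderEmbOfFin hcard s : ℕ) := by
  have h0 : (0 : ℕ) < n := lt_of_le_of_lt (Nat.zero_le _) s.isLt
  have := strictMono_gap (orderEmbOfFin_strictMono' hcard) ⟨0, h0⟩ s
    (by rw [Fin.le_def]; exact Nat.zero_le _)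
  simp only [Fin.val_mk] at this
  omega

lemma orderEmbOfFin_upper {S : Finset ℕ} (hcard : S.card = n) {N : ℕ}
    (hsub : S ⊆ range N) (s : Fin n) :
    (S.orderEmbOfFin hcard s : ℕ) + (n - 1 - (s : ℕ)) < N := by
  have hn : 0 < n := lt_of_le_of_lt (Nat.zero_le _) s.isLt
  have h1 := strictMono_gap (orderEmbOfFin_strictMono' hcard) s ⟨n - 1, by omega⟩
    (by rw [Fin.le_def]; show (s : ℕ) ≤ n - 1; have := s.isLt; omega)
  simp only [Fin.val_mk] at h1
  have h2 : (S.orderEmbOfFin hcard ⟨n - 1, by omega⟩ : ℕ) < N :=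
    mem_range.mp (hsub (orderEmbOfFin_mem _ _ _))
  omega

lemma bwdval_lt {m : ℕ} (hm : 0 < m) {π : Equiv.Perm (Fin n)} {S : Finset ℕ}
    (hcard : S.card = n) (hn : 0 < n)
    (hsub : S ⊆ range (m + n - 1 - desA n π)) (i : Fin n) :
    bwdval π S hcard i < m := by
  have hD : desA n π ≤ n - 1 := desA_le π
  have h1 := orderEmbOfFin_upper hcard hsub (π⁻¹ i)
  have h3 := dcnt_le_desA π ((π⁻¹ i : Fin n) : ℕ)
  have h4 := dcnt_le π ((π⁻¹ i : Fin n) : ℕ)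
  have h5 := (π⁻¹ i).isLt
  rw [bwdval]
  omega

lemma bwd_val {m : ℕ} (hm : 0 < m) {π : Equiv.Perm (Fin n)} {S : Finset ℕ}
    (hcard : S.card = n) (i : Fin n) (hlt : bwdval π S hcard i < m) :
    (bwd hm π S hcard i : ℕ) = bwdval π S hcard i := by
  rw [bwd]
  exact Nat.mod_eq_of_lt hlt

lemma bwd_compat {m : ℕ} (hm : 0 < m) {π : Equiv.Perm (Fin n)} {S : Finset ℕ}
    (hcard : S.card = n) (hn : 0 < n)
    (hsub : S ⊆ range (m + n - 1 - desA n π)) :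
    Compat (bwd hm π S hcard) π := by
  have hvlt := bwdval_lt hm hcard hn hsub
  rw [compat_iff_adj]
  intro s hs
  have hinv1 : π⁻¹ (π ⟨s, by omega⟩) = ⟨s, by omega⟩ := Equiv.symm_apply_apply _ _
  have hinv2 : π⁻¹ (π ⟨s + 1, hs⟩) = ⟨s + 1, hs⟩ := Equiv.symm_apply_apply _ _
  have hv1 : (bwd hm π S hcard (π ⟨s, by omega⟩) : ℕ)
      = (S.orderEmbOfFin hcard ⟨s, by omega⟩ : ℕ) + dcnt π s - s := by
    rw [bwd_val hm hcard _ (hvlt _), bwdval, hinv1]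
  have hv2 : (bwd hm π S hcard (π ⟨s + 1, hs⟩) : ℕ)
      = (S.orderEmbOfFin hcard ⟨s + 1, hs⟩ : ℕ) + dcnt π (s + 1) - (s + 1) := by
    rw [bwd_val hm hcard _ (hvlt _), bwdval, hinv2]
  simp only [key, Prod.Lex.lt_iff, ofLex_toLex]
  rw [hv1, hv2]
  have hlt : (S.orderEmbOfFin hcard ⟨s, by omega⟩ : ℕ)
      < (S.orderEmbOfFin hcard ⟨s + 1, hs⟩ : ℕ) :=
    orderEmbOfFin_strictMono' hcard (by rw [Fin.lt_def]; simp)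
  have hge : (s : ℕ) ≤ (S.orderEmbOfFin hcard ⟨s, by omega⟩ : ℕ) := by
    have := orderEmbOfFin_ge hcard ⟨s, by omega⟩
    simpa using this
  have hd := dcnt_succ π s
  have hdle := dcnt_le π s
  by_cases hmem : s ∈ desSetA n π
  · left
    rw [if_pos hmem] at hd
    omega
  · have hπne : π ⟨s, by omega⟩ ≠ π ⟨s + 1, hs⟩ := by
      intro hc
      have := π.injective hc
      simp [Fin.ext_iff] at this
    have hπlt : (π ⟨s, by omega⟩ : ℕ) < (π ⟨s + 1, hs⟩ : ℕ) := by
      have hnot := (mem_desSetA hs).not.mp hmem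
      have : (π ⟨s, by omega⟩ : ℕ) ≠ (π ⟨s + 1, hs⟩ : ℕ) := fun hc => hπne (Fin.ext hc)
      omega
    rw [if_neg hmem] at hd
    have hAB : (S.orderEmbOfFin hcard ⟨s, by omega⟩ : ℕ) + dcnt π s - s
        ≤ (S.orderEmbOfFin hcard ⟨s + 1, hs⟩ : ℕ) + dcnt π (s + 1) - (s + 1) := by omega
    rcases lt_or_eq_of_le hAB with hlt2 | heq2
    · exact Or.inl hlt2
    · exact Or.inr ⟨heq2, hπlt⟩

lemma bval_lt {m : ℕ} {π : Equiv.Perm (Fin n)} {h : Fin n → Fin m}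
    (hh : Compat h π) (hn : 0 < n) (s : Fin n) :
    bval π h s < m + n - 1 - desA n π := by
  have hD : desA n π ≤ n - 1 := desA_le π
  have hmono := bval_strictMono hh
  have hle : bval π h s ≤ bval π h ⟨n - 1, by omega⟩ :=
    hmono.monotone (by rw [Fin.le_def]; show (s : ℕ) ≤ n - 1; have := s.isLt; omega)
  have hlast : bval π h ⟨n - 1, by omega⟩
      = (h (π ⟨n - 1, by omega⟩) : ℕ) + (n - 1 - dcnt π (n - 1)) := rfl
  have hdl := dcnt_last π
  have hb := (h (π ⟨n - 1, by omega⟩)).isLt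
  omega

lemma bwd_bval {m : ℕ} (hm : 0 < m) {π : Equiv.Perm (Fin n)} {S : Finset ℕ}
    (hcard : S.card = n) (hn : 0 < n)
    (hsub : S ⊆ range (m + n - 1 - desA n π)) (s : Fin n) :
    bval π (bwd hm π S hcard) s = (S.orderEmbOfFin hcard s : ℕ) := by
  have hvlt := bwdval_lt hm hcard hn hsub
  have hinv : π⁻¹ (π s) = s := Equiv.symm_apply_apply _ _
  have hv : (bwd hm π S hcard (π s) : ℕ)
      = (S.orderEmbOfFin hcard s : ℕ) + dcnt π (s : ℕ) - (s : ℕ) := by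
    rw [bwd_val hm hcard _ (hvlt _), bwdval, hinv]
  rw [bval, hv]
  have hge := orderEmbOfFin_ge hcard s
  have hdle := dcnt_le π (s : ℕ)
  omega

lemma bwd_of_bval {m : ℕ} (hm : 0 < m) {π : Equiv.Perm (Fin n)} {h : Fin n → Fin m}
    (hh : Compat h π)
    (pf : (image (fun s : Fin n => bval π h s) univ).card = n) :
    bwd hm π (image (fun s : Fin n => bval π h s) univ) pf = h := by
  have hmono := bval_strictMono hh
  have hf : ∀ x : Fin n, bval π h x ∈ image (fun s : Fin n => bval π h s) univ :=
    fun x => mem_image_of_mem _ (mem_univ x)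
  have hval : ∀ x : Fin n,
      ((image (fun s : Fin n => bval π h s) univ).orderEmbOfFin pf x : ℕ) = bval π h x := by
    intro x
    exact congrFun (Finset.orderEmbOfFin_unique (f := fun s => bval π h s) pf hf hmono).symm x
  have hbw : ∀ i : Fin n, bwdval π (image (fun s : Fin n => bval π h s) univ) pf i
      = (h i : ℕ) := by
    intro i
    rw [bwdval, hval]
    have h1 := dcnt_le π ((π⁻¹ i : Fin n) : ℕ)
    have h2 : π (π⁻¹ i) = i := Equiv.apply_symm_apply _ _
    rw [bval, h2]
    omega
  funext i
  apply Fin.ext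
  rw [bwd_val hm pf i (by rw [hbw]; exact (h i).isLt)]
  exact hbw i

set_option maxHeartbeats 1000000 in
lemma card_Cset (m : ℕ) (π : Equiv.Perm (Fin n)) :
    (Cset m π).card = (m + n - 1 - desA n π).choose n := by
  classical
  rcases Nat.eq_zero_or_pos n with hn | hn
  · subst hn
    have h1 : Cset m π = univ := by
      apply Finset.eq_univ_of_forall
      intro h
      rw [mem_Cset]
      exact fun a => a.elim0
    rw [h1, card_univ]
    simp [Nat.choose_zero_right]
  rcases Nat.eq_zero_or_pos m with hm | hm
  · subst hm
    have h1 : Cset 0 π = ∅ :=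
      eq_empty_of_forall_notMem (fun h _ => (h ⟨0, by omega⟩).elim0)
    rw [h1, card_empty, Nat.choose_eq_zero_of_lt (by have := desA_le π; omega)]
  -- main case
  have hD : desA n π ≤ n - 1 := desA_le π
  have htarget : ((range (m + n - 1 - desA n π)).powersetCard n).card
      = (m + n - 1 - desA n π).choose n := by
    rw [Finset.card_powersetCard, card_range]
  rw [← htarget]
  refine Finset.card_bij'
    (fun h _ => image (fun s : Fin n => bval π h s) univ)
    (fun S hS => bwd hm π S (mem_powersetCard.mp hS).2)
    ?_ ?_ ?_ ?_
  · -- forward membership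
    intro h hh
    rw [mem_powersetCard]
    constructor
    · intro x hx
      rw [mem_image] at hx
      obtain ⟨s, -, rfl⟩ := hx
      rw [mem_range]
      exact bval_lt (mem_Cset.mp hh) hn s
    · rw [card_image_of_injective _ (bval_strictMono (mem_Cset.mp hh)).injective]
      simp
  · -- backward membership
    intro S hS
    rw [mem_Cset]
    exact bwd_compat hm _ hn (mem_powersetCard.mp hS).1
  · -- left inverse
    intro h hh
    exact bwd_of_bval hm (mem_Cset.mp hh) _
  · -- right inverse
    intro S hS
    have hcard := (mem_powersetCard.mp hS).2
    have hsub := (mem_powersetCard.mp hS).1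
    have main : ∀ pf : S.card = n,
        image (fun s : Fin n => bval π (bwd hm π S pf) s) univ = S := by
      intro pf
      have himg : image (fun s : Fin n => bval π (bwd hm π S pf) s) univ
          = image (fun s : Fin n => (S.orderEmbOfFin pf s : ℕ)) univ :=
        image_congr (fun s _ => bwd_bval hm pf hn hsub s)
      rw [himg]
      apply coe_injective
      rw [coe_image, coe_univ, Set.image_univ]
      exact Finset.range_orderEmbOfFin S pf
    exact main _

lemma compat_glue {a b : ℕ} {σ τ π : Equiv.Perm (Fin n)} (hστ : σ * τ = π)
    {G : Fin n → Fin a} {F : Fin n → Fin b} (hG : Compat G σ) (hF : Compat F τ)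
    (H : Fin n → Fin (a * b)) (hH : ∀ i, (H i : ℕ) = a * (F (σ⁻¹ i) : ℕ) + (G i : ℕ)) :
    Compat H π := by
  intro s s' hss'
  have hπ : ∀ x, π x = σ (τ x) := by intro x; rw [← hστ]; rfl
  have hσinv : ∀ x, σ⁻¹ (π x) = τ x := by intro x; rw [hπ x]; simp
  have hf := hF hss'
  simp only [key, Prod.Lex.lt_iff, ofLex_toLex] at hf ⊢
  rcases hf with hf | ⟨hfeq, hτlt⟩
  · left
    rw [hH, hH, hσinv, hσinv]
    calc a * (F (τ s) : ℕ) + (G (π s) : ℕ)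
        < a * (F (τ s) : ℕ) + a := by have := (G (π s)).isLt; omega
      _ = a * ((F (τ s) : ℕ) + 1) := by ring
      _ ≤ a * (F (τ s') : ℕ) := Nat.mul_le_mul_left a (by omega)
      _ ≤ a * (F (τ s') : ℕ) + (G (π s') : ℕ) := Nat.le_add_right _ _
  · have hg := hG (show τ s < τ s' from hτlt)
    simp only [key, Prod.Lex.lt_iff, ofLex_toLex] at hg
    rw [← hπ, ← hπ] at hg
    rcases hg with hg | ⟨hgeq, hπlt⟩
    · left
      rw [hH, hH, hσinv, hσinv, hfeq]
      omega
    · right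
      constructor
      · rw [hH, hH, hσinv, hσinv, hfeq, hgeq]
      · exact hπlt

lemma compat_div {a b : ℕ} (ha : 0 < a) {π σ : Equiv.Perm (Fin n)} {H : Fin n → Fin (a * b)}
    (hH : Compat H π) {G : Fin n → Fin a} (hGdef : ∀ i, (G i : ℕ) = (H i : ℕ) % a)
    (hG : Compat G σ) {F : Fin n → Fin b} (hFdef : ∀ j, (F j : ℕ) = (H (σ j) : ℕ) / a) :
    Compat F (σ⁻¹ * π) := by
  have refl : ∀ i j : Fin n, key G i < key G j → σ⁻¹ i < σ⁻¹ j := by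
    intro i j hij
    have := hG.lt_iff_lt (a := σ⁻¹ i) (b := σ⁻¹ j)
    simp only [Equiv.Perm.inv_def, Equiv.apply_symm_apply] at this
    exact this.mp hij
  intro s s' hss'
  have hmul : ∀ x, (σ⁻¹ * π) x = σ⁻¹ (π x) := fun x => rfl
  have hσinv : ∀ x, σ (σ⁻¹ (π x)) = π x := by intro x; simp
  have hh := hH hss'
  simp only [key, Prod.Lex.lt_iff, ofLex_toLex] at hh
  simp only [key, Prod.Lex.lt_iff, ofLex_toLex, hmul, hFdef, hσinv]
  have hda := Nat.div_add_mod (H (π s) : ℕ) a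
  have hda' := Nat.div_add_mod (H (π s') : ℕ) a
  rcases hh with hh | ⟨hheq, hπlt⟩
  · have hdle : (H (π s) : ℕ) / a ≤ (H (π s') : ℕ) / a := Nat.div_le_div_right (le_of_lt hh)
    rcases lt_or_eq_of_le hdle with hdlt | hdeq
    · exact Or.inl hdlt
    · right
      refine ⟨hdeq, ?_⟩
      have hmodlt : (H (π s) : ℕ) % a < (H (π s') : ℕ) % a := by
        obtain ⟨A, hA⟩ : ∃ A, a * ((H (π s') : ℕ) / a) = A := ⟨_, rfl⟩
        rw [hdeq] at hda
        rw [hA] at hda hda'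
        omega
      have : key G (π s) < key G (π s') := by
        simp only [key, Prod.Lex.lt_iff, ofLex_toLex, hGdef]
        exact Or.inl hmodlt
      exact refl _ _ this
  · right
    refine ⟨by rw [hheq], ?_⟩
    have : key G (π s) < key G (π s') := by
      simp only [key, Prod.Lex.lt_iff, ofLex_toLex, hGdef, hheq]
      exact Or.inr ⟨by trivial, hπlt⟩
    exact refl _ _ this

def mkG {a b : ℕ} (ha : 0 < a) (h : Fin n → Fin (a * b)) : Fin n → Fin a :=
  fun i => ⟨(h i : ℕ) % a, Nat.mod_lt _ ha⟩

noncomputable def mkσ {a b : ℕ} (ha : 0 < a) (h : Fin n → Fin (a * b)) : Equiv.Perm (Fin n) :=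
  Tuple.sort (key (mkG ha h))

noncomputable def mkF {a b : ℕ} (ha : 0 < a) (hb : 0 < b) (h : Fin n → Fin (a * b)) :
    Fin n → Fin b :=
  fun j => ⟨(h (mkσ ha h j) : ℕ) / a, by
    exact (Nat.div_lt_iff_lt_mul ha).mpr (Nat.lt_of_lt_of_eq (h _).isLt (Nat.mul_comm a b))⟩

def glue {a b : ℕ} (σ : Equiv.Perm (Fin n)) (G : Fin n → Fin a) (F : Fin n → Fin b) :
    Fin n → Fin (a * b) :=
  fun i => ⟨a * (F (σ⁻¹ i) : ℕ) + (G i : ℕ), by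
    have h1 := (F (σ⁻¹ i)).isLt
    have h2 := (G i).isLt
    calc a * (F (σ⁻¹ i) : ℕ) + (G i : ℕ) < a * ((F (σ⁻¹ i) : ℕ) + 1) := by
          rw [Nat.mul_add, Nat.mul_one]; omega
      _ ≤ a * b := Nat.mul_le_mul_left a (by omega)⟩

lemma glue_mk {a b : ℕ} (ha : 0 < a) (hb : 0 < b) (h : Fin n → Fin (a * b)) :
    glue (mkσ ha h) (mkG ha h) (mkF ha hb h) = h := by
  funext i
  apply Fin.ext
  simp only [glue, mkF, mkG, Equiv.Perm.inv_def, Equiv.apply_symm_apply]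
  exact Nat.div_add_mod _ _

lemma mkG_glue {a b : ℕ} (ha : 0 < a) (σ : Equiv.Perm (Fin n))
    (G : Fin n → Fin a) (F : Fin n → Fin b) : mkG ha (glue σ G F) = G := by
  funext i
  apply Fin.ext
  simp only [mkG, glue]
  rw [Nat.mul_add_mod]
  exact Nat.mod_eq_of_lt (G i).isLt

lemma mkσ_glue {a b : ℕ} (ha : 0 < a) {σ : Equiv.Perm (Fin n)}
    {G : Fin n → Fin a} (F : Fin n → Fin b) (hG : Compat G σ) :
    mkσ ha (glue σ G F) = σ := by
  rw [mkσ, mkG_glue ha σ G F]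
  exact compat_unique (compat_sort G) hG

lemma mkF_glue {a b : ℕ} (ha : 0 < a) (hb : 0 < b) {σ : Equiv.Perm (Fin n)}
    {G : Fin n → Fin a} (F : Fin n → Fin b) (hG : Compat G σ) :
    mkF ha hb (glue σ G F) = F := by
  funext j
  apply Fin.ext
  simp only [mkF, mkσ_glue ha F hG, glue, Equiv.Perm.inv_def, Equiv.symm_apply_apply]
  rw [Nat.mul_add_div ha]
  rw [Nat.div_eq_of_lt (G (σ j)).isLt, Nat.add_zero]

lemma card_Cset_mul (a b : ℕ) (ha : 0 < a) (hb : 0 < b) (π : Equiv.Perm (Fin n)) :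
    (Cset (a * b) π).card
      = ∑ p ∈ Finset.univ.filter
          (fun p : Equiv.Perm (Fin n) × Equiv.Perm (Fin n) => p.1 * p.2 = π),
          (Cset a p.1).card * (Cset b p.2).card := by
  classical
  set P := Finset.univ.filter
      (fun p : Equiv.Perm (Fin n) × Equiv.Perm (Fin n) => p.1 * p.2 = π) with hP
  have hrhs : ∑ p ∈ P, (Cset a p.1).card * (Cset b p.2).card
      = (P.sigma (fun p => (Cset a p.1) ×ˢ (Cset b p.2))).card := by
    rw [Finset.card_sigma]
    exact Finset.sum_congr rfl fun p _ => (Finset.card_product _ _).symm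
  rw [hrhs]
  refine Finset.card_bij'
    (fun h _ => ⟨(mkσ ha h, (mkσ ha h)⁻¹ * π), (mkG ha h, mkF ha hb h)⟩)
    (fun x _ => glue x.1.1 x.2.1 x.2.2) ?_ ?_ ?_ ?_
  · intro h hh
    rw [mem_Cset] at hh
    rw [Finset.mem_sigma]
    constructor
    · rw [hP, Finset.mem_filter]
      exact ⟨Finset.mem_univ _, by group⟩
    · rw [Finset.mem_product]
      constructor
      · rw [mem_Cset]; exact compat_sort _
      · rw [mem_Cset]
        exact compat_div ha hh (fun i => rfl) (compat_sort _) (fun j => rfl)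
  · intro x hx
    rw [Finset.mem_sigma, hP, Finset.mem_filter, Finset.mem_product] at hx
    obtain ⟨⟨-, hστ⟩, hG, hF⟩ := hx
    rw [mem_Cset] at hG hF
    rw [mem_Cset]
    exact compat_glue hστ hG hF _ (fun i => rfl)
  · intro h hh
    exact glue_mk ha hb h
  · intro x hx
    rw [Finset.mem_sigma, hP, Finset.mem_filter, Finset.mem_product] at hx
    obtain ⟨⟨-, hστ⟩, hG, hF⟩ := hx
    rw [mem_Cset] at hG hF
    obtain ⟨⟨σ, τ⟩, G, F⟩ := x
    simp only at hστ hG hF ⊢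
    have h1 : mkσ ha (glue σ G F) = σ := mkσ_glue ha F hG
    have h2 : mkG ha (glue σ G F) = G := mkG_glue ha σ G F
    have h3 : mkF ha hb (glue σ G F) = F := mkF_glue ha hb F hG
    have h4 : (mkσ ha (glue σ G F))⁻¹ * π = τ := by
      rw [h1, ← hστ]; group
    have h5 : σ⁻¹ * π = τ := by rw [← hστ]; group
    simp only [h1, h2, h3, h4, h5]

end StructA

/-- For positive integers `k, l` and any `π ∈ S_n`:
`C(kl+n-1-des(π), n) = Σ_{στ=π} C(k+n-1-des(σ), n) · C(l+n-1-des(τ), n)`. -/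
theorem structure_mult_A (n k l : ℕ) (hk : 0 < k) (hl : 0 < l)
    (π : Equiv.Perm (Fin n)) :
    Nat.choose (k * l + n - 1 - desA n π) n
      = ∑ p ∈ Finset.univ.filter
          (fun p : Equiv.Perm (Fin n) × Equiv.Perm (Fin n) => p.1 * p.2 = π),
          Nat.choose (k + n - 1 - desA n p.1) n *
            Nat.choose (l + n - 1 - desA n p.2) n := by
  rw [← StructA.card_Cset (k * l) π, StructA.card_Cset_mul k l hk hl π]
  apply Finset.sum_congr rfl
  intro p _
  rw [StructA.card_Cset, StructA.card_Cset]
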